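/- Let n, m, l ∈ ℕ, A ∈ ℝ^{n×n}, B ∈ ℝ^{n×m}, C ∈ ℝ^{l×n}, D ∈ ℝ^{l×m}, L ∈ ℝ^{n×l}. For each i = 1,…,n let f_i : ℝ → ℝ be globally Lipschitz with constant L_{pi} > 0 (|f_i(a) − f_i(b)| ≤ L_{pi}|a − b| for all a, b), and let λ = max_i L_{pi}. Consider the system x(k+1) = f(A x(k) + B u(k)), y(k) = C x(k) + D u(k), and the observer x̂(k+1) = f(A x̂(k) + B u(k) + L(y(k) − ŷ(k))), ŷ(k) = C x̂(k) + D u(k), with f applied componentwise. If the 2n×2n block matrix [[(1/λ²) I_n, (A − LC)^T], [A − LC, I_n]] is positive definite, then for every input sequence u : ℕ → ℝ^m and all initial conditions x(0), x̂(0) ∈ ℝ^n, the estimation error converges: ‖x(k) − x̂(k)‖ → 0 as k → ∞ (Euclidean norm). -/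

import Mathlib

open Matrix Filter
open scoped Matrix.Norms.L2Operator

/-- Euclidean norm of a finitely-indexed real vector. -/
noncomputable def eNorm {ι : Type*} [Fintype ι] (v : ι → ℝ) : ℝ :=
  Real.sqrt (∑ i, (v i) ^ 2)

/-- Symmetric positive definiteness of a real matrix. -/
def PosDefM {ι : Type*} [Fintype ι] (P : Matrix ι ι ℝ) : Prop :=
  Pᵀ = P ∧ ∀ v : ι → ℝ, v ≠ 0 → 0 < v ⬝ᵥ (P *ᵥ v)

lemma eNorm_nonneg {ι : Type*} [Fintype ι] (v : ι → ℝ) : 0 ≤ eNorm v :=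
  Real.sqrt_nonneg _

lemma eNorm_smul {ι : Type*} [Fintype ι] (t : ℝ) (ht : 0 ≤ t) (v : ι → ℝ) :
    eNorm (t • v) = t * eNorm v := by
  unfold eNorm
  have h : ∑ i, ((t • v) i) ^ 2 = t ^ 2 * ∑ i, (v i) ^ 2 := by
    rw [Finset.mul_sum]
    exact Finset.sum_congr rfl fun i _ => by simp [mul_pow]
  rw [h, Real.sqrt_mul (sq_nonneg t), Real.sqrt_sq ht]

/-- **Observer convergence (Proposition 13 of the paper).** With `λ = max_i L_{pi}`,
if the block LMI `[[(1/λ²) I, (A - LC)ᵀ], [A - LC, I]] ≻ 0` holds, then for every input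
sequence and all initial conditions the observer estimation error converges to zero. -/
theorem observer_convergence
    (n m l : ℕ)
    (A : Matrix (Fin n) (Fin n) ℝ) (B : Matrix (Fin n) (Fin m) ℝ)
    (C : Matrix (Fin l) (Fin n) ℝ) (D : Matrix (Fin l) (Fin m) ℝ)
    (L : Matrix (Fin n) (Fin l) ℝ)
    (f : Fin n → ℝ → ℝ) (Lp : Fin n → ℝ)
    (hLp : ∀ i, 0 < Lp i)
    (hLip : ∀ i, ∀ a b : ℝ, |f i a - f i b| ≤ Lp i * |a - b|)
    (lam : ℝ) (hlam_ub : ∀ i, Lp i ≤ lam) (hlam_mem : ∃ i, Lp i = lam)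
    (hLMI : PosDefM (Matrix.fromBlocks
      ((1 / lam ^ 2) • (1 : Matrix (Fin n) (Fin n) ℝ)) (A - L * C)ᵀ (A - L * C) 1))
    (u : ℕ → Fin m → ℝ) (x xh : ℕ → Fin n → ℝ)
    (hx : ∀ k, x (k + 1) = fun i => f i ((A *ᵥ x k + B *ᵥ u k) i))
    (hxh : ∀ k, xh (k + 1) = fun i =>
      f i ((A *ᵥ xh k + B *ᵥ u k
        + L *ᵥ ((C *ᵥ x k + D *ᵥ u k) - (C *ᵥ xh k + D *ᵥ u k))) i)) :
    Tendsto (fun k => eNorm (x k - xh k)) atTop (nhds 0) := by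
  obtain ⟨i0, hi0⟩ := hlam_mem
  have hlam : 0 < lam := hi0 ▸ hLp i0
  set M : Matrix (Fin n) (Fin n) ℝ := A - L * C with hM
  -- Consequence of the LMI: λ²‖Ma‖² < ‖a‖² for a ≠ 0.
  have hPD : ∀ a : Fin n → ℝ, a ≠ 0 →
      lam ^ 2 * (∑ i, ((M *ᵥ a) i) ^ 2) < ∑ i, (a i) ^ 2 := by
    intro a ha
    obtain ⟨_, hpd⟩ := hLMI
    have hv : (Sum.elim a (-(M *ᵥ a)) : Fin n ⊕ Fin n → ℝ) ≠ 0 := by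
      intro h
      apply ha
      funext i
      exact congrFun h (Sum.inl i)
    have hq := hpd _ hv
    rw [Matrix.fromBlocks_mulVec, sumElim_dotProduct_sumElim] at hq
    simp only [Sum.elim_comp_inl, Sum.elim_comp_inr] at hq
    have h1 : ((1 / lam ^ 2) • (1 : Matrix (Fin n) (Fin n) ℝ)) *ᵥ a
        = (1 / lam ^ 2) • a := by
      rw [Matrix.smul_mulVec, Matrix.one_mulVec]
    have h2 : a ⬝ᵥ (Mᵀ *ᵥ (-(M *ᵥ a))) = -((M *ᵥ a) ⬝ᵥ (M *ᵥ a)) := by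
      rw [Matrix.dotProduct_mulVec, Matrix.vecMul_transpose, dotProduct_neg]
    rw [h1, dotProduct_add, dotProduct_add, h2, Matrix.one_mulVec,
      dotProduct_smul, neg_dotProduct, neg_dotProduct,
      dotProduct_neg] at hq
    have hda : a ⬝ᵥ a = ∑ i, (a i) ^ 2 := by
      simp [dotProduct, sq]
    have hdm : (M *ᵥ a) ⬝ᵥ (M *ᵥ a) = ∑ i, ((M *ᵥ a) i) ^ 2 := by
      simp [dotProduct, sq]
    rw [hda, hdm, smul_eq_mul] at hq
    have hlam2 : (0:ℝ) < lam ^ 2 := by positivity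
    have hkey : (∑ i, ((M *ᵥ a) i) ^ 2) < 1 / lam ^ 2 * ∑ i, (a i) ^ 2 := by linarith
    have h3 := mul_lt_mul_of_pos_left hkey hlam2
    have h4 : lam ^ 2 * (1 / lam ^ 2 * ∑ i, (a i) ^ 2) = ∑ i, (a i) ^ 2 := by
      field_simp
    linarith
  -- error sequence
  set e : ℕ → Fin n → ℝ := fun k => x k - xh k with he
  -- eNorm positivity facts
  have eNorm_eq_zero : ∀ v : Fin n → ℝ, eNorm v = 0 ↔ v = 0 := by
    intro v
    unfold eNorm
    rw [Real.sqrt_eq_zero (by positivity)]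
    constructor
    · intro h
      funext i
      have := (Finset.sum_eq_zero_iff_of_nonneg (fun i _ => sq_nonneg (v i))).mp h i
        (Finset.mem_univ i)
      exact pow_eq_zero_iff (n := 2) (by norm_num) |>.mp this
    · intro h; simp [h]
  -- contraction constant via compactness of the unit sphere
  set S : Set (Fin n → ℝ) := {a | ∑ i, (a i) ^ 2 = 1} with hS
  have hSclosed : IsClosed S := by
    have : Continuous fun a : Fin n → ℝ => ∑ i, (a i) ^ 2 :=
      continuous_finset_sum _ fun i _ => (continuous_apply i).pow 2
    exact isClosed_eq this continuous_const
  have hSbdd : Bornology.IsBounded S := by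
    apply (Metric.isBounded_iff_subset_closedBall 0).mpr
    refine ⟨1, fun a haS => ?_⟩
    rw [Metric.mem_closedBall, dist_pi_le_iff zero_le_one]
    intro i
    have hd : dist (a i) ((0 : Fin n → ℝ) i) = |a i| := by
      simp [Real.dist_eq]
    rw [hd]
    have h1 : (a i) ^ 2 ≤ 1 := by
      rw [← haS]
      exact Finset.single_le_sum (fun j _ => sq_nonneg (a j)) (Finset.mem_univ i)
    nlinarith [abs_nonneg (a i), sq_abs (a i)]
  have hScomp : IsCompact S := Metric.isCompact_of_isClosed_isBounded hSclosed hSbdd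
  have hSne : S.Nonempty := by
    refine ⟨Pi.single i0 1, ?_⟩
    simp [hS, Pi.single_apply]
  have hcont : Continuous (fun a : Fin n → ℝ => lam * eNorm (M *ᵥ a)) := by
    unfold eNorm
    refine continuous_const.mul (Real.continuous_sqrt.comp ?_)
    refine continuous_finset_sum _ fun i _ => ?_
    have : Continuous fun a : Fin n → ℝ => (M *ᵥ a) i := by
      simp only [Matrix.mulVec, dotProduct]
      exact continuous_finset_sum _ fun j _ => continuous_const.mul (continuous_apply j)
    exact this.pow 2
  obtain ⟨a0, ha0S, ha0max⟩ := hScomp.exists_isMaxOn hSne hcont.continuousOn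
  set c : ℝ := lam * eNorm (M *ᵥ a0) with hc
  have hc0 : 0 ≤ c := mul_nonneg hlam.le (eNorm_nonneg _)
  have hc1 : c < 1 := by
    have ha0ne : a0 ≠ 0 := by
      intro h
      rw [hS] at ha0S
      simp [h] at ha0S
    have := hPD a0 ha0ne
    rw [ha0S] at this
    have hsq : (lam * eNorm (M *ᵥ a0)) ^ 2 < 1 := by
      have hsqrt : (eNorm (M *ᵥ a0)) ^ 2 = ∑ i, ((M *ᵥ a0) i) ^ 2 := by
        unfold eNorm
        rw [Real.sq_sqrt (by positivity)]
      nlinarith [hsqrt]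
    nlinarith [hc0]
  -- uniform bound via homogeneity
  have hbound : ∀ a : Fin n → ℝ, lam * eNorm (M *ᵥ a) ≤ c * eNorm a := by
    intro a
    by_cases ha : a = 0
    · simp [ha, Matrix.mulVec_zero, eNorm]
    · have ht : 0 < eNorm a := by
        rcases lt_or_eq_of_le (eNorm_nonneg a) with h | h
        · exact h
        · exact absurd ((eNorm_eq_zero a).mp h.symm) ha
      set t : ℝ := eNorm a with htdef
      have htsq : t ^ 2 = ∑ i, (a i) ^ 2 := by
        rw [htdef]; unfold eNorm; rw [Real.sq_sqrt (by positivity)]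
      have hbS : (t⁻¹ • a) ∈ S := by
        rw [hS]
        show ∑ i, ((t⁻¹ • a) i) ^ 2 = 1
        have : ∑ i, ((t⁻¹ • a) i) ^ 2 = t⁻¹ ^ 2 * ∑ i, (a i) ^ 2 := by
          rw [Finset.mul_sum]
          apply Finset.sum_congr rfl; intro i _
          simp [Pi.smul_apply, smul_eq_mul]; ring
        rw [this, ← htsq]
        field_simp
      have hmax := ha0max hbS
      simp only [Set.mem_setOf_eq] at hmax
      have hMv : M *ᵥ (t⁻¹ • a) = t⁻¹ • (M *ᵥ a) := Matrix.mulVec_smul M t⁻¹ a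
      rw [hMv, eNorm_smul t⁻¹ (by positivity) _] at hmax
      -- hmax : lam * (t⁻¹ * eNorm (M *ᵥ a)) ≤ c
      have := mul_le_mul_of_nonneg_left hmax ht.le
      calc lam * eNorm (M *ᵥ a) = t * (lam * (t⁻¹ * eNorm (M *ᵥ a))) := by
            field_simp
        _ ≤ t * c := this
        _ = c * eNorm a := by rw [mul_comm, htdef]
  -- one-step contraction
  have hstep : ∀ k, eNorm (e (k + 1)) ≤ c * eNorm (e k) := by
    intro k
    have hdiff : ∀ i : Fin n,
        (A *ᵥ x k + B *ᵥ u k) i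
          - (A *ᵥ xh k + B *ᵥ u k
              + L *ᵥ ((C *ᵥ x k + D *ᵥ u k) - (C *ᵥ xh k + D *ᵥ u k))) i
        = (M *ᵥ e k) i := by
      intro i
      have h1 : (C *ᵥ x k + D *ᵥ u k) - (C *ᵥ xh k + D *ᵥ u k) = C *ᵥ (e k) := by
        rw [he]
        simp only [he]
        rw [Matrix.mulVec_sub]
        abel
      rw [h1, Matrix.mulVec_mulVec, hM, Matrix.sub_mulVec, he]
      simp [Matrix.mulVec_sub]
      ring
    have habs : ∀ i : Fin n, |e (k + 1) i| ≤ lam * |(M *ᵥ e k) i| := by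
      intro i
      have he1 : e (k + 1) i
          = f i ((A *ᵥ x k + B *ᵥ u k) i)
            - f i ((A *ᵥ xh k + B *ᵥ u k
              + L *ᵥ ((C *ᵥ x k + D *ᵥ u k) - (C *ᵥ xh k + D *ᵥ u k))) i) := by
        rw [he]
        simp [hx k, hxh k]
      rw [he1]
      calc |f i _ - f i _| ≤ Lp i * |_ - _| := hLip i _ _
        _ ≤ lam * |(M *ᵥ e k) i| := by
            rw [hdiff i]
            exact mul_le_mul_of_nonneg_right (hlam_ub i) (abs_nonneg _)
    have hsum : ∑ i, (e (k + 1) i) ^ 2 ≤ lam ^ 2 * ∑ i, ((M *ᵥ e k) i) ^ 2 := by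
      rw [Finset.mul_sum]
      apply Finset.sum_le_sum
      intro i _
      have := habs i
      nlinarith [abs_nonneg (e (k+1) i), sq_abs (e (k+1) i), sq_abs ((M *ᵥ e k) i),
        abs_nonneg ((M *ᵥ e k) i)]
    calc eNorm (e (k + 1)) = Real.sqrt (∑ i, (e (k + 1) i) ^ 2) := rfl
      _ ≤ Real.sqrt (lam ^ 2 * ∑ i, ((M *ᵥ e k) i) ^ 2) := Real.sqrt_le_sqrt hsum
      _ = lam * eNorm (M *ᵥ e k) := by
          rw [Real.sqrt_mul (sq_nonneg lam), Real.sqrt_sq hlam.le]; rfl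
      _ ≤ c * eNorm (e k) := hbound (e k)
  -- geometric decay
  have hgeo : ∀ k, eNorm (e k) ≤ c ^ k * eNorm (e 0) := by
    intro k
    induction k with
    | zero => simp
    | succ k ih =>
      calc eNorm (e (k + 1)) ≤ c * eNorm (e k) := hstep k
        _ ≤ c * (c ^ k * eNorm (e 0)) := mul_le_mul_of_nonneg_left ih hc0
        _ = c ^ (k + 1) * eNorm (e 0) := by ring
  -- squeeze
  have hlim : Tendsto (fun k => c ^ k * eNorm (e 0)) atTop (nhds 0) := by
    have := (tendsto_pow_atTop_nhds_zero_of_lt_one hc0 hc1).mul_const (eNorm (e 0))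
    simpa using this
  exact squeeze_zero (fun k => eNorm_nonneg _) hgeo hlim
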